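/- Let n ≥ 2, let D ∈ ℝ^{n×n} be symmetric, let Π ∈ ℝ^{n×n} be a permutation matrix, and set C := Πᵀ D Π. Then OGW(C,D) = 0, OGW_lb(C,D) = 0, and OGW_o(C,D) = 0, where OGW(C,D) := (1/n²)(‖C‖_F² + ‖D‖_F² − 2·sup_{P ∈ O_n ∩ E_n} tr(C P D Pᵀ)), OGW_o(C,D) := (1/n²)(‖C‖_F² + ‖D‖_F² − 2·sup_{P ∈ O_n} tr(C P D Pᵀ)), and OGW_lb(C,D) := (1/n²)·[ ‖C‖_F² + ‖D‖_F² − 2·Σ_{i=1}^{n−1} λᵢ↓(Vᵀ C V)·λᵢ↓(Vᵀ D V) − (4/n)·‖Vᵀ C 1‖·‖Vᵀ D 1‖ − (2/n²)·(1ᵀ C 1)(1ᵀ D 1) ] for a fixed V ∈ ℝ^{n×(n−1)} with Vᵀ·1 = 0 and Vᵀ V = I_{n−1}. -/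

import Mathlib

open Matrix BigOperators

noncomputable section

/-- Squared Frobenius norm of a real matrix. -/
def frobSq {m n : ℕ} (A : Matrix (Fin m) (Fin n) ℝ) : ℝ := ∑ i, ∑ j, (A i j) ^ 2

/-- Euclidean norm of a real vector. -/
def vnorm {n : ℕ} (v : Fin n → ℝ) : ℝ := Real.sqrt (∑ i, (v i) ^ 2)

/-- Eigenvalues of a real symmetric (Hermitian) matrix, listed in descending order. -/
def eigDesc {n : ℕ} {A : Matrix (Fin n) (Fin n) ℝ} (hA : A.IsHermitian) : Fin n → ℝ :=
  fun i => (hA.eigenvalues ∘ Tuple.sort hA.eigenvalues) i.rev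

/-- Conjugating a real symmetric (Hermitian) matrix preserves symmetry. -/
theorem conjHerm {n m : ℕ} (V : Matrix (Fin n) (Fin m) ℝ) {C : Matrix (Fin n) (Fin n) ℝ}
    (hC : C.IsHermitian) : (Vᵀ * C * V).IsHermitian := by
  have h := Matrix.isHermitian_mul_mul_conjTranspose Vᵀ hC
  simpa using h


/-- The set `O_n ∩ E_n` of orthogonal matrices whose row and column sums all equal `1`. -/
def OE (n : ℕ) : Set (Matrix (Fin n) (Fin n) ℝ) :=
  {P | Pᵀ * P = 1 ∧ (P *ᵥ (fun _ => (1 : ℝ)) = fun _ => 1)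
    ∧ (Pᵀ *ᵥ (fun _ => (1 : ℝ)) = fun _ => 1)}

/-- The orthogonal Gromov-Wasserstein discrepancy `OGW`. -/
def OGW (n : ℕ) (C D : Matrix (Fin n) (Fin n) ℝ) : ℝ :=
  (1 / (n : ℝ) ^ 2) * (frobSq C + frobSq D
    - 2 * sSup ((fun P => Matrix.trace (C * P * D * Pᵀ)) '' (OE n)))


/-- The closed-form lower bound `OGW_lb` of the orthogonal Gromov-Wasserstein discrepancy. -/
def OGWlb {n : ℕ} (V : Matrix (Fin n) (Fin (n - 1)) ℝ)
    (C D : Matrix (Fin n) (Fin n) ℝ) (hC : C.IsHermitian) (hD : D.IsHermitian) : ℝ :=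
  (1 / (n : ℝ) ^ 2) * (frobSq C + frobSq D
    - 2 * ∑ i, eigDesc (conjHerm V hC) i * eigDesc (conjHerm V hD) i
    - (4 / (n : ℝ)) * vnorm ((Vᵀ * C) *ᵥ (fun _ => (1 : ℝ)))
        * vnorm ((Vᵀ * D) *ᵥ (fun _ => (1 : ℝ)))
    - (2 / (n : ℝ) ^ 2) * ((∑ i, ∑ j, C i j) * (∑ i, ∑ j, D i j)))


/-- The relaxation `OGW_o`, optimizing the coupling over all orthogonal matrices. -/
def OGWo (n : ℕ) (C D : Matrix (Fin n) (Fin n) ℝ) : ℝ :=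
  (1 / (n : ℝ) ^ 2) * (frobSq C + frobSq D
    - 2 * sSup ((fun P => Matrix.trace (C * P * D * Pᵀ)) ''
        {P : Matrix (Fin n) (Fin n) ℝ | Pᵀ * P = 1}))

namespace OGWaux

open Polynomial

variable {n m : ℕ}

/-- the all-ones vector -/
def ones (n : ℕ) : Fin n → ℝ := fun _ => 1

lemma perm_orth (σ : Equiv.Perm (Fin n)) : (σ.permMatrix ℝ)ᵀ * (σ.permMatrix ℝ) = 1 := by
  rw [← PEquiv.toMatrix_symm, ← PEquiv.toMatrix_trans, PEquiv.symm_trans_self]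
  ext i j
  simp [PEquiv.toMatrix_apply, PEquiv.ofSet, one_apply, ← Equiv.toPEquiv_symm,
    Equiv.toPEquiv_apply]

lemma perm_transpose (σ : Equiv.Perm (Fin n)) :
    (σ.permMatrix ℝ)ᵀ = (σ⁻¹).permMatrix ℝ := by
  rw [← PEquiv.toMatrix_symm, ← Equiv.toPEquiv_symm]
  rfl

lemma perm_mulVec_ones (σ : Equiv.Perm (Fin n)) :
    (σ.permMatrix ℝ) *ᵥ ones n = ones n := by
  funext i
  simp [ones, mulVec, dotProduct, PEquiv.toMatrix_apply, Equiv.toPEquiv_apply]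

lemma frobSq_eq_trace (A : Matrix (Fin m) (Fin n) ℝ) : frobSq A = trace (Aᵀ * A) := by
  unfold frobSq trace
  simp only [diag_apply, mul_apply, transpose_apply, sq]
  rw [Finset.sum_comm]

lemma herm_transpose {A : Matrix (Fin n) (Fin n) ℝ} (hA : A.IsHermitian) : Aᵀ = A := by
  rw [← Matrix.conjTranspose_eq_transpose_of_trivial]; exact hA

lemma trace_herm_mul_le {A B : Matrix (Fin n) (Fin n) ℝ} (hA : A.IsHermitian)
    (hB : B.IsHermitian) : trace (A * B) ≤ (frobSq A + frobSq B) / 2 := by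
  have hB' : ∀ i j, B j i = B i j := fun i j => by
    conv_lhs => rw [← herm_transpose hB]
    rfl
  have h1 : trace (A * B) = ∑ i, ∑ j, A i j * B i j := by
    unfold trace
    simp only [diag_apply, mul_apply]
    exact Finset.sum_congr rfl fun i _ => Finset.sum_congr rfl fun j _ => by rw [hB' i j]
  have h2 : (frobSq A + frobSq B) / 2 = ∑ i, ∑ j, (A i j ^ 2 + B i j ^ 2) / 2 := by
    simp [frobSq, Finset.sum_div, ← Finset.sum_add_distrib]
  rw [h1, h2]
  refine Finset.sum_le_sum fun i _ => Finset.sum_le_sum fun j _ => ?_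
  nlinarith [sq_nonneg (A i j - B i j)]

lemma frobSq_conj {P A : Matrix (Fin n) (Fin n) ℝ} (h1 : Pᵀ * P = 1) :
    frobSq (P * A * Pᵀ) = frobSq A := by
  rw [frobSq_eq_trace, frobSq_eq_trace]
  have h : (P * A * Pᵀ)ᵀ * (P * A * Pᵀ) = P * (Aᵀ * A) * Pᵀ := by
    simp only [transpose_mul, transpose_transpose, Matrix.mul_assoc]
    rw [← Matrix.mul_assoc Pᵀ P, h1, Matrix.one_mul]
  rw [h, trace_mul_cycle, ← Matrix.mul_assoc, h1, Matrix.one_mul]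

lemma charpoly_conj (A Q : Matrix (Fin n) (Fin n) ℝ) (h1 : Qᵀ * Q = 1) :
    (Qᵀ * A * Q).charpoly = A.charpoly := by
  have h2 : Q * Qᵀ = 1 := mul_eq_one_comm.mp h1
  have hQ : (C : ℝ →+* ℝ[X]).mapMatrix Qᵀ * (C : ℝ →+* ℝ[X]).mapMatrix Q = 1 := by
    rw [← _root_.map_mul, h1, _root_.map_one]
  have hQ2 : (C : ℝ →+* ℝ[X]).mapMatrix Q * (C : ℝ →+* ℝ[X]).mapMatrix Qᵀ = 1 := by
    rw [← _root_.map_mul, h2, _root_.map_one]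
  have hcm : charmatrix (Qᵀ * A * Q) =
      (C : ℝ →+* ℝ[X]).mapMatrix Qᵀ * charmatrix A * (C : ℝ →+* ℝ[X]).mapMatrix Q := by
    unfold charmatrix
    rw [mul_sub, sub_mul, scalar_apply, ← smul_one_eq_diagonal]
    congr 1
    · rw [mul_smul_comm, smul_mul_assoc, mul_one, hQ]
    · rw [← _root_.map_mul, ← _root_.map_mul]
  rw [Matrix.charpoly, Matrix.charpoly, hcm, det_mul, det_mul, mul_comm, ← mul_assoc,
    ← det_mul, hQ2, det_one, one_mul]

lemma charpoly_hermitian {A : Matrix (Fin n) (Fin n) ℝ} (hA : A.IsHermitian) :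
    A.charpoly = ∏ i, (X - C (hA.eigenvalues i)) := by
  set U : Matrix (Fin n) (Fin n) ℝ := (hA.eigenvectorUnitary : Matrix (Fin n) (Fin n) ℝ) with hU
  have h1 : Uᵀ * U = 1 := by
    have h := hA.eigenvectorUnitary.2.1
    rw [Matrix.star_eq_conjTranspose, Matrix.conjTranspose_eq_transpose_of_trivial] at h
    exact h
  have hspec : A = U * diagonal hA.eigenvalues * Uᵀ := by
    have h := hA.spectral_theorem
    simpa [Function.comp, Matrix.star_eq_conjTranspose,
      Matrix.conjTranspose_eq_transpose_of_trivial] using h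
  have hdiag : Uᵀ * A * U = diagonal hA.eigenvalues := by
    conv_lhs => rw [hspec]
    rw [Matrix.mul_assoc, Matrix.mul_assoc, h1, Matrix.mul_one, ← Matrix.mul_assoc, h1,
      Matrix.one_mul]
  have hc := charpoly_conj A U h1
  rw [hdiag] at hc
  rw [← hc]
  rw [charpoly_of_upperTriangular _ (blockTriangular_diagonal _)]
  simp

lemma eig_multiset {A : Matrix (Fin n) (Fin n) ℝ} (hA : A.IsHermitian) :
    A.charpoly.roots = Multiset.map hA.eigenvalues Finset.univ.val := by
  rw [charpoly_hermitian hA, Finset.prod_eq_multiset_prod]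
  have h : Multiset.map (fun i => X - C (hA.eigenvalues i)) Finset.univ.val
      = Multiset.map (fun a : ℝ => X - C a) (Multiset.map hA.eigenvalues Finset.univ.val) := by
    rw [Multiset.map_map]; rfl
  rw [h, roots_multiset_prod_X_sub_C]

lemma eigDesc_eq_of_charpoly {A B : Matrix (Fin n) (Fin n) ℝ} (hA : A.IsHermitian)
    (hB : B.IsHermitian) (h : A.charpoly = B.charpoly) : eigDesc hA = eigDesc hB := by
  have hm : (List.ofFn hA.eigenvalues : Multiset ℝ) = (List.ofFn hB.eigenvalues : Multiset ℝ) := by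
    have h2 := (eig_multiset hA).symm.trans (h ▸ eig_multiset hB)
    simpa [List.ofFn_eq_map, Fin.univ_def] using h2
  have hperm : List.Perm (List.ofFn (hA.eigenvalues ∘ Tuple.sort hA.eigenvalues))
      (List.ofFn (hB.eigenvalues ∘ Tuple.sort hB.eigenvalues)) :=
    ((Tuple.sort hA.eigenvalues).ofFn_comp_perm hA.eigenvalues).trans
      ((Multiset.coe_eq_coe.mp hm).trans
        ((Tuple.sort hB.eigenvalues).ofFn_comp_perm hB.eigenvalues).symm)
  have heq := List.Perm.eq_of_sortedLE
    (Tuple.monotone_sort hA.eigenvalues).sortedLE_ofFn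
    (Tuple.monotone_sort hB.eigenvalues).sortedLE_ofFn hperm
  have hfun := List.ofFn_injective heq
  funext i
  simp only [eigDesc]
  rw [hfun]

lemma sum_eigDesc_sq {A : Matrix (Fin n) (Fin n) ℝ} (hA : A.IsHermitian) :
    ∑ i, eigDesc hA i * eigDesc hA i = ∑ i, hA.eigenvalues i * hA.eigenvalues i := by
  unfold eigDesc
  have h1 : ∑ i : Fin n, (hA.eigenvalues ∘ Tuple.sort hA.eigenvalues) i.rev
      * (hA.eigenvalues ∘ Tuple.sort hA.eigenvalues) i.rev
      = ∑ i : Fin n, (hA.eigenvalues ∘ Tuple.sort hA.eigenvalues) i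
        * (hA.eigenvalues ∘ Tuple.sort hA.eigenvalues) i :=
    Fintype.sum_equiv Fin.revPerm _ _ (fun i => rfl)
  have h2 : ∑ i : Fin n, (hA.eigenvalues ∘ Tuple.sort hA.eigenvalues) i
      * (hA.eigenvalues ∘ Tuple.sort hA.eigenvalues) i
      = ∑ i, hA.eigenvalues i * hA.eigenvalues i :=
    Fintype.sum_equiv (Tuple.sort hA.eigenvalues) _ _ (fun i => rfl)
  rw [h1, h2]

lemma frobSq_herm {A : Matrix (Fin n) (Fin n) ℝ} (hA : A.IsHermitian) :
    frobSq A = ∑ i, hA.eigenvalues i * hA.eigenvalues i := by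
  set U : Matrix (Fin n) (Fin n) ℝ := (hA.eigenvectorUnitary : Matrix (Fin n) (Fin n) ℝ) with hU
  have h1 : Uᵀ * U = 1 := by
    have h := hA.eigenvectorUnitary.2.1
    rw [Matrix.star_eq_conjTranspose, Matrix.conjTranspose_eq_transpose_of_trivial] at h
    exact h
  have hspec : A = U * diagonal hA.eigenvalues * Uᵀ := by
    have h := hA.spectral_theorem
    simpa [Function.comp, Matrix.star_eq_conjTranspose,
      Matrix.conjTranspose_eq_transpose_of_trivial] using h
  have hAA : Aᵀ * A = U * (diagonal hA.eigenvalues * diagonal hA.eigenvalues) * Uᵀ := by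
    rw [herm_transpose hA]
    conv_lhs => rw [hspec]
    simp only [Matrix.mul_assoc]
    rw [← Matrix.mul_assoc Uᵀ U, h1, Matrix.one_mul]
  rw [frobSq_eq_trace, hAA, trace_mul_cycle, ← Matrix.mul_assoc, h1, Matrix.one_mul,
    diagonal_mul_diagonal, trace_diagonal]

lemma proj_eq (hn : 2 ≤ n) (V : Matrix (Fin n) (Fin (n - 1)) ℝ)
    (hV1 : Vᵀ *ᵥ ones n = 0) (hV2 : Vᵀ * V = 1) :
    V * Vᵀ = 1 - ((n : ℝ)⁻¹) • vecMulVec (ones n) (ones n) := by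
  have hn0 : (n : ℝ) ≠ 0 := by positivity
  set K : Matrix (Fin n) (Fin n) ℝ := vecMulVec (ones n) (ones n) with hK
  set M : Matrix (Fin n) (Fin n) ℝ := V * Vᵀ with hM
  have hcolsum : ∀ j, ∑ k, V k j = 0 := fun j => by
    have := congrFun hV1 j
    simpa [mulVec, dotProduct, ones] using this
  have hKV : K * V = 0 := by
    ext i j
    simp [hK, mul_apply, vecMulVec_apply, ones, hcolsum j]
  have hVK : Vᵀ * K = 0 := by
    ext i j
    simp [hK, mul_apply, vecMulVec_apply, ones, hcolsum i]
  have hKM : K * M = 0 := by rw [hM, ← Matrix.mul_assoc, hKV, Matrix.zero_mul]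
  have hMK : M * K = 0 := by rw [hM, Matrix.mul_assoc, hVK, Matrix.mul_zero]
  have hMM : M * M = M := by rw [hM, Matrix.mul_assoc, ← Matrix.mul_assoc Vᵀ, hV2,
    Matrix.one_mul]
  have hKK : K * K = (n : ℝ) • K := by
    ext i j
    simp [hK, mul_apply, vecMulVec_apply, ones]
  set N : Matrix (Fin n) (Fin n) ℝ := 1 - ((n : ℝ)⁻¹) • K - M with hN
  have hNN : N * N = N := by
    rw [hN]
    simp only [sub_mul, mul_sub, Matrix.one_mul, Matrix.mul_one, smul_mul_assoc,
      mul_smul_comm, hKM, hMK, hMM, hKK, smul_smul, smul_zero, sub_zero]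
    match_scalars <;> field_simp <;> ring
  have hKt : Kᵀ = K := by
    ext i j
    simp [hK, vecMulVec_apply, ones]
  have hMt : Mᵀ = M := by rw [hM, transpose_mul, transpose_transpose]
  have hNt : Nᵀ = N := by
    rw [hN, transpose_sub, transpose_sub, transpose_smul, transpose_one, hKt, hMt]
  have htrN : trace N = 0 := by
    rw [hN]
    have h1 : trace (1 : Matrix (Fin n) (Fin n) ℝ) = n := by simp
    have h2 : trace K = (n : ℝ) := by simp [hK, trace, vecMulVec_apply, ones]
    have h3 : trace M = (n : ℝ) - 1 := by
      rw [hM, trace_mul_comm, hV2, trace_one]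
      simp [Nat.cast_sub (show 1 ≤ n by omega)]
    rw [trace_sub, trace_sub, trace_smul, h1, h2, h3, smul_eq_mul, inv_mul_cancel₀ hn0]
    ring
  have hfrob : frobSq N = 0 := by
    rw [frobSq_eq_trace, hNt, hNN, htrN]
  have hN0 : N = 0 := by
    ext i j
    have hsum := hfrob
    unfold frobSq at hsum
    have hnn : ∀ p ∈ Finset.univ, (0:ℝ) ≤ ∑ q, (N p q)^2 :=
      fun p _ => Finset.sum_nonneg fun q _ => sq_nonneg _
    have h1 := (Finset.sum_eq_zero_iff_of_nonneg hnn).mp hsum i (Finset.mem_univ i)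
    have h2 := (Finset.sum_eq_zero_iff_of_nonneg
      (fun q _ => sq_nonneg (N i q))).mp h1 j (Finset.mem_univ j)
    simpa [pow_eq_zero_iff] using h2
  have := sub_eq_zero.mp hN0
  linear_combination (norm := module) -this

lemma trace_mul_vecMulVec (X : Matrix (Fin n) (Fin n) ℝ) (u v : Fin n → ℝ) :
    trace (X * vecMulVec u v) = v ⬝ᵥ (X *ᵥ u) := by
  unfold trace dotProduct mulVec
  simp only [diag_apply, mul_apply, vecMulVec_apply, dotProduct, Finset.mul_sum]
  exact Finset.sum_congr rfl fun i _ => Finset.sum_congr rfl fun j _ => by ring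

lemma frob_decomp (hn : 2 ≤ n) (V : Matrix (Fin n) (Fin (n - 1)) ℝ)
    (hV1 : Vᵀ *ᵥ ones n = 0) (hV2 : Vᵀ * V = 1)
    {D : Matrix (Fin n) (Fin n) ℝ} (hD : D.IsHermitian) :
    frobSq D = frobSq (Vᵀ * D * V)
      + (2 * (n : ℝ)⁻¹) * (((Vᵀ * D) *ᵥ ones n) ⬝ᵥ ((Vᵀ * D) *ᵥ ones n))
      + ((n : ℝ)⁻¹)^2 * (ones n ⬝ᵥ (D *ᵥ ones n))^2 := by
  have hn0 : (n : ℝ) ≠ 0 := by positivity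
  set K : Matrix (Fin n) (Fin n) ℝ := vecMulVec (ones n) (ones n) with hK
  set M : Matrix (Fin n) (Fin n) ℝ := V * Vᵀ with hM
  set c : ℝ := (n : ℝ)⁻¹ with hc
  have hR : M + c • K = 1 := by rw [hM, proj_eq hn V hV1 hV2]; abel
  have hT1 : trace (D * M * (D * M)) = frobSq (Vᵀ * D * V) := by
    rw [frobSq_eq_trace, herm_transpose (by
      have := Matrix.isHermitian_mul_mul_conjTranspose Vᵀ hD
      simpa using this)]
    rw [hM]
    rw [show D * (V * Vᵀ) * (D * (V * Vᵀ)) = (D * V) * ((Vᵀ * D * V) * Vᵀ) by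
      simp only [Matrix.mul_assoc]]
    rw [trace_mul_comm]
    simp only [Matrix.mul_assoc]
  have hT2 : trace (D * M * (D * (c • K)))
      = c * (((Vᵀ * D) *ᵥ ones n) ⬝ᵥ ((Vᵀ * D) *ᵥ ones n)) := by
    simp only [Matrix.mul_smul, trace_smul, smul_eq_mul]
    congr 1
    rw [show D * M * (D * K) = (D * M * D) * K by simp only [Matrix.mul_assoc]]
    rw [hK, trace_mul_vecMulVec, hM]
    rw [show D * (V * Vᵀ) * D = (D * V) * (Vᵀ * D) by simp only [Matrix.mul_assoc]]
    rw [← Matrix.mulVec_mulVec, dotProduct_mulVec, ← Matrix.mulVec_transpose,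
      Matrix.transpose_mul, herm_transpose hD]
  have hT3 : trace (D * (c • K) * (D * M)) = trace (D * M * (D * (c • K))) :=
    trace_mul_comm _ _
  have hT4 : trace (D * (c • K) * (D * (c • K))) = c^2 * (ones n ⬝ᵥ (D *ᵥ ones n))^2 := by
    have hKv : K *ᵥ (D *ᵥ ones n) = (ones n ⬝ᵥ (D *ᵥ ones n)) • ones n := by
      ext i
      simp [hK, mulVec, vecMulVec_apply, dotProduct, ones, Finset.mul_sum]
    have htr : trace (D * K * (D * K)) = (ones n ⬝ᵥ (D *ᵥ ones n))^2 := by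
      rw [show D * K * (D * K) = (D * K * D) * K by simp only [Matrix.mul_assoc]]
      rw [hK, trace_mul_vecMulVec]
      rw [show (D * (vecMulVec (ones n) (ones n)) * D) *ᵥ ones n
          = D *ᵥ ((vecMulVec (ones n) (ones n)) *ᵥ (D *ᵥ ones n)) by
        simp [Matrix.mulVec_mulVec, Matrix.mul_assoc], ← hK, hKv, Matrix.mulVec_smul,
        dotProduct_smul, smul_eq_mul, sq]
    simp only [Matrix.mul_smul, Matrix.smul_mul, smul_smul, trace_smul, smul_eq_mul, htr]
    ring
  calc frobSq D = trace (D * (M + c • K) * (D * (M + c • K))) := by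
        rw [hR, Matrix.mul_one, frobSq_eq_trace, herm_transpose hD]
    _ = trace (D * M * (D * M)) + trace (D * M * (D * (c • K)))
        + trace (D * (c • K) * (D * M)) + trace (D * (c • K) * (D * (c • K))) := by
        simp only [Matrix.mul_add, Matrix.add_mul, trace_add]
        abel
    _ = frobSq (Vᵀ * D * V)
      + (2 * c) * (((Vᵀ * D) *ᵥ ones n) ⬝ᵥ ((Vᵀ * D) *ᵥ ones n))
      + c^2 * (ones n ⬝ᵥ (D *ᵥ ones n))^2 := by
        rw [hT3, hT1, hT2, hT4]; ring

lemma sSup_eq {C D : Matrix (Fin n) (Fin n) ℝ} (hC : C.IsHermitian) (hD : D.IsHermitian)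
    (hCD : frobSq C = frobSq D) (S : Set (Matrix (Fin n) (Fin n) ℝ))
    (horth : ∀ P ∈ S, Pᵀ * P = 1) (P₀ : Matrix (Fin n) (Fin n) ℝ) (hP₀ : P₀ ∈ S)
    (hval : trace (C * P₀ * D * P₀ᵀ) = frobSq D) :
    sSup ((fun P => trace (C * P * D * Pᵀ)) '' S) = frobSq D := by
  have hub : ∀ x ∈ (fun P => trace (C * P * D * Pᵀ)) '' S, x ≤ frobSq D := by
    rintro x ⟨P, hP, rfl⟩
    have h1 := horth P hP
    have hherm : (P * D * Pᵀ).IsHermitian := by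
      have := Matrix.isHermitian_mul_mul_conjTranspose P hD
      simpa using this
    have hle := trace_herm_mul_le hC hherm
    rw [frobSq_conj h1, hCD] at hle
    calc trace (C * P * D * Pᵀ) = trace (C * (P * D * Pᵀ)) := by
          simp only [Matrix.mul_assoc]
      _ ≤ (frobSq D + frobSq D) / 2 := hle
      _ = frobSq D := by ring
  refine le_antisymm (csSup_le ⟨_, Set.mem_image_of_mem _ hP₀⟩ hub) ?_
  have hmem : frobSq D ∈ (fun P => trace (C * P * D * Pᵀ)) '' S := ⟨P₀, hP₀, hval⟩
  exact le_csSup ⟨frobSq D, hub⟩ hmem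

end OGWaux

/-- If `C = Pmᵀ D Pm` for a permutation matrix `Pm` (i.e. the graphs are isomorphic), then
`OGW`, `OGW_lb` and `OGW_o` all vanish. -/
theorem OGW_zero_of_isomorphic (n : ℕ) (hn : 2 ≤ n)
    (D : Matrix (Fin n) (Fin n) ℝ) (hD : D.IsHermitian)
    (Pm : Matrix (Fin n) (Fin n) ℝ) (hPm : ∃ σ : Equiv.Perm (Fin n), Pm = σ.permMatrix ℝ)
    (V : Matrix (Fin n) (Fin (n - 1)) ℝ)
    (hV1 : Vᵀ *ᵥ (fun _ => (1 : ℝ)) = 0) (hV2 : Vᵀ * V = 1) :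
    OGW n (Pmᵀ * D * Pm) D = 0
    ∧ OGWlb V (Pmᵀ * D * Pm) D (conjHerm Pm hD) hD = 0
    ∧ OGWo n (Pmᵀ * D * Pm) D = 0 := by
  classical
  obtain ⟨σ, rfl⟩ := hPm
  set Pm : Matrix (Fin n) (Fin n) ℝ := σ.permMatrix ℝ with hPmdef
  have hn0 : (n : ℝ) ≠ 0 := by positivity
  have hV1' : Vᵀ *ᵥ OGWaux.ones n = 0 := hV1
  have hP1 : Pmᵀ * Pm = 1 := OGWaux.perm_orth σ
  have hP2 : Pm * Pmᵀ = 1 := mul_eq_one_comm.mp hP1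
  have hPo : Pm *ᵥ OGWaux.ones n = OGWaux.ones n := OGWaux.perm_mulVec_ones σ
  have hPto : Pmᵀ *ᵥ OGWaux.ones n = OGWaux.ones n := by
    rw [OGWaux.perm_transpose]; exact OGWaux.perm_mulVec_ones σ⁻¹
  set C : Matrix (Fin n) (Fin n) ℝ := Pmᵀ * D * Pm with hCdef
  have hC : C.IsHermitian := conjHerm Pm hD
  have hFC : frobSq C = frobSq D := by
    have h := OGWaux.frobSq_conj (P := Pmᵀ) (A := D)
      (by rw [transpose_transpose]; exact hP2)
    rwa [transpose_transpose] at h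
  have hval : trace (C * Pmᵀ * D * Pmᵀᵀ) = frobSq D := by
    rw [transpose_transpose]
    have h : C * Pmᵀ * D * Pm = Pmᵀ * (D * D) * Pm := by
      rw [hCdef]
      simp only [Matrix.mul_assoc]
      rw [← Matrix.mul_assoc Pm Pmᵀ _, hP2, Matrix.one_mul]
    rw [h, trace_mul_cycle, ← Matrix.mul_assoc, hP2, Matrix.one_mul,
      OGWaux.frobSq_eq_trace, OGWaux.herm_transpose hD]
  -- OGW
  have hOGW : OGW n C D = 0 := by
    have hmem : Pmᵀ ∈ OE n :=
      ⟨by rw [transpose_transpose]; exact hP2, hPto, by rw [transpose_transpose]; exact hPo⟩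
    have hsup := OGWaux.sSup_eq hC hD hFC (OE n) (fun P hP => hP.1) Pmᵀ hmem hval
    unfold OGW
    rw [hsup, hFC]
    ring
  -- OGWo
  have hOGWo : OGWo n C D = 0 := by
    have hmem : Pmᵀ ∈ {P : Matrix (Fin n) (Fin n) ℝ | Pᵀ * P = 1} := by
      rw [Set.mem_setOf_eq, transpose_transpose]; exact hP2
    have hsup := OGWaux.sSup_eq hC hD hFC {P : Matrix (Fin n) (Fin n) ℝ | Pᵀ * P = 1}
      (fun P hP => hP) Pmᵀ hmem hval
    unfold OGWo
    rw [hsup, hFC]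
    ring
  -- OGWlb
  set W : Matrix (Fin n) (Fin (n - 1)) ℝ := Pm * V with hWdef
  set Q : Matrix (Fin (n - 1)) (Fin (n - 1)) ℝ := Vᵀ * W with hQdef
  have hWo : Wᵀ *ᵥ OGWaux.ones n = 0 := by
    rw [hWdef, transpose_mul, ← Matrix.mulVec_mulVec, hPto]
    exact hV1'
  have hWcol : ∀ j, ∑ k, W k j = 0 := fun j => by
    have := congrFun hWo j
    simpa [mulVec, dotProduct, OGWaux.ones] using this
  have hKW : vecMulVec (OGWaux.ones n) (OGWaux.ones n) * W = 0 := by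
    ext i j
    simp [mul_apply, vecMulVec_apply, OGWaux.ones, hWcol j]
  have hVQ : V * Q = W := by
    rw [hQdef, ← Matrix.mul_assoc, OGWaux.proj_eq hn V hV1' hV2]
    rw [Matrix.sub_mul, Matrix.one_mul, Matrix.smul_mul, hKW, smul_zero, sub_zero]
  have hQ1 : Qᵀ * Q = 1 := by
    have h1 : Qᵀ * Q = Wᵀ * (V * Q) := by
      rw [hQdef]
      simp only [transpose_mul, transpose_transpose, Matrix.mul_assoc]
    rw [h1, hVQ, hWdef, transpose_mul, Matrix.mul_assoc, ← Matrix.mul_assoc Pmᵀ Pm V, hP1,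
      Matrix.one_mul, hV2]
  have hQ2 : Q * Qᵀ = 1 := mul_eq_one_comm.mp hQ1
  have hconj : Vᵀ * C * V = Qᵀ * (Vᵀ * D * V) * Q := by
    have h1 : Qᵀ * (Vᵀ * D * V) * Q = (V * Q)ᵀ * D * (V * Q) := by
      simp only [transpose_mul, transpose_transpose, Matrix.mul_assoc]
    rw [h1, hVQ, hWdef, hCdef, transpose_mul]
    simp only [Matrix.mul_assoc]
  have heig : eigDesc (conjHerm V (conjHerm Pm hD)) = eigDesc (conjHerm V hD) :=
    OGWaux.eigDesc_eq_of_charpoly _ _ (by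
      rw [show Vᵀ * (Pmᵀ * D * Pm) * V = Qᵀ * (Vᵀ * D * V) * Q from hconj,
        OGWaux.charpoly_conj _ _ hQ1])
  have hsum : ∑ i, eigDesc (conjHerm V (conjHerm Pm hD)) i * eigDesc (conjHerm V hD) i
      = frobSq (Vᵀ * D * V) := by
    rw [heig, OGWaux.sum_eigDesc_sq, ← OGWaux.frobSq_herm]
  have hw : (Vᵀ * C) *ᵥ OGWaux.ones n = Qᵀ *ᵥ ((Vᵀ * D) *ᵥ OGWaux.ones n) := by
    have hQV : Qᵀ * Vᵀ = Wᵀ := by rw [← transpose_mul, hVQ]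
    have e1 : Vᵀ * C = (Qᵀ * (Vᵀ * D)) * Pm := by
      rw [← Matrix.mul_assoc Qᵀ Vᵀ D, hQV, hWdef, hCdef, transpose_mul]
      simp only [Matrix.mul_assoc]
    rw [e1, ← Matrix.mulVec_mulVec, hPo, ← Matrix.mulVec_mulVec]
  have hdot : ∀ {k : ℕ} (x : Fin k → ℝ), ∑ i, x i ^ 2 = x ⬝ᵥ x := by
    intro k x; simp [dotProduct, sq]
  have hvn : vnorm ((Vᵀ * C) *ᵥ (fun _ => (1:ℝ)))
      = vnorm ((Vᵀ * D) *ᵥ (fun _ => (1:ℝ))) := by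
    unfold vnorm
    congr 1
    rw [hdot, hdot]
    rw [show ((Vᵀ * C) *ᵥ fun _ => (1:ℝ)) = Qᵀ *ᵥ ((Vᵀ * D) *ᵥ OGWaux.ones n) from hw]
    rw [dotProduct_mulVec, vecMul_transpose, Matrix.mulVec_mulVec, hQ2, Matrix.one_mulVec]
    rfl
  have hd : ∀ X : Matrix (Fin n) (Fin n) ℝ,
      OGWaux.ones n ⬝ᵥ (X *ᵥ OGWaux.ones n) = ∑ i, ∑ j, X i j := by
    intro X; simp [dotProduct, mulVec, OGWaux.ones]
  have hsumC : (∑ i, ∑ j, C i j) = ∑ i, ∑ j, D i j := by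
    rw [← hd C, ← hd D, hCdef, ← Matrix.mulVec_mulVec, hPo, ← Matrix.mulVec_mulVec,
      dotProduct_mulVec, vecMul_transpose, hPo]
  have hvv : vnorm ((Vᵀ * D) *ᵥ (fun _ => (1:ℝ))) * vnorm ((Vᵀ * D) *ᵥ (fun _ => (1:ℝ)))
      = ((Vᵀ * D) *ᵥ OGWaux.ones n) ⬝ᵥ ((Vᵀ * D) *ᵥ OGWaux.ones n) := by
    unfold vnorm
    rw [Real.mul_self_sqrt (Finset.sum_nonneg fun i _ => sq_nonneg _), hdot]
    rfl
  have hdec := OGWaux.frob_decomp hn V hV1' hV2 hD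
  have hOGWlb : OGWlb V C D (conjHerm Pm hD) hD = 0 := by
    unfold OGWlb
    rw [hFC, hsum, hvn, hsumC,
      show (∑ i, ∑ j, D i j) = OGWaux.ones n ⬝ᵥ (D *ᵥ OGWaux.ones n) from (hd D).symm]
    rw [hdec]
    linear_combination (-(4:ℝ) / (n:ℝ)^3) * hvv
  exact ⟨hOGW, hOGWlb, hOGWo⟩

end
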